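/- Let u, v ∈ ℝ^p be unit vectors and let λ ∈ ℝ with 0 ≤ λ < 1. Then Tr[(I_p − λ·v·vᵀ)⁻¹·(I_p − λ·u·uᵀ)] − p = (λ²/(1−λ))·(1 − (uᵀv)²), and this quantity is at most (2λ²/(1−λ))·‖u − v‖₂². -/

import Mathlib

open Matrix

lemma vecMulVec_mul_vecMulVec' {p : ℕ} (a b c d : Fin p → ℝ) :
    vecMulVec a b * vecMulVec c d = (b ⬝ᵥ c) • vecMulVec a d := by
  ext i j
  simp only [mul_apply, vecMulVec_apply, Matrix.smul_apply, dotProduct, smul_eq_mul,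
    Finset.sum_mul, Finset.mul_sum]
  apply Finset.sum_congr rfl
  intro k _
  ring

lemma trace_vecMulVec' {p : ℕ} (a b : Fin p → ℝ) :
    Matrix.trace (vecMulVec a b) = a ⬝ᵥ b := by
  simp [Matrix.trace, Matrix.diag, vecMulVec_apply, dotProduct]

/-- The trace-term bound `T₁` in the KL-divergence computation of the proof of
Theorem 3: for unit vectors `u, v ∈ ℝ^p` and `0 ≤ λ < 1`,
`Tr[(I − λ v vᵀ)⁻¹ (I − λ u uᵀ)] − p = (λ²/(1−λ))(1 − (uᵀv)²)`
and this is at most `(2λ²/(1−λ)) ‖u − v‖₂²`. -/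
theorem stmt5 (p : ℕ) (u v : Fin p → ℝ)
    (hu : ∑ i, u i ^ 2 = 1) (hv : ∑ i, v i ^ 2 = 1)
    (lam : ℝ) (hlam0 : 0 ≤ lam) (hlam1 : lam < 1) :
    Matrix.trace ((1 - lam • vecMulVec v v)⁻¹ * (1 - lam • vecMulVec u u)) - p
        = lam ^ 2 / (1 - lam) * (1 - (u ⬝ᵥ v) ^ 2) ∧
      lam ^ 2 / (1 - lam) * (1 - (u ⬝ᵥ v) ^ 2)
        ≤ 2 * lam ^ 2 / (1 - lam) * ∑ i, (u i - v i) ^ 2 := by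
  have h1m : (0:ℝ) < 1 - lam := by linarith
  have hvv : v ⬝ᵥ v = 1 := by
    simpa [dotProduct, sq] using hv
  have huu : u ⬝ᵥ u = 1 := by
    simpa [dotProduct, sq] using hu
  set c : ℝ := lam / (1 - lam) with hc
  have hcoef : c - lam - lam * c = 0 := by
    rw [hc]
    field_simp
    ring
  have key : vecMulVec v v * vecMulVec v v = vecMulVec v v := by
    rw [vecMulVec_mul_vecMulVec', hvv, one_smul]
  have hinv : (1 - lam • vecMulVec v v)⁻¹ = 1 + c • vecMulVec v v := by
    apply Matrix.inv_eq_right_inv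
    have h : (1 - lam • vecMulVec v v) * (1 + c • vecMulVec v v)
        = 1 + (c - lam - lam * c) • vecMulVec v v := by
      simp only [Matrix.sub_mul, Matrix.mul_add, Matrix.one_mul, Matrix.mul_one,
        Matrix.smul_mul, Matrix.mul_smul, smul_smul, key]
      module
    rw [h, hcoef, zero_smul, add_zero]
  have htr : Matrix.trace ((1 - lam • vecMulVec v v)⁻¹ * (1 - lam • vecMulVec u u))
      = p + c - lam - lam * c * (u ⬝ᵥ v) ^ 2 := by
    rw [hinv]
    simp only [Matrix.add_mul, Matrix.one_mul, Matrix.mul_sub, Matrix.mul_one,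
      Matrix.smul_mul, Matrix.mul_smul, smul_smul, vecMulVec_mul_vecMulVec']
    simp only [trace_sub, trace_add, trace_smul, trace_one, trace_vecMulVec',
      smul_eq_mul, Fintype.card_fin, hvv, huu, dotProduct_comm v u]
    ring
  constructor
  · rw [htr]
    have h1 : c - lam = lam ^ 2 / (1 - lam) := by
      rw [hc]; field_simp; ring
    have h2 : lam * c = lam ^ 2 / (1 - lam) := by
      rw [hc]; field_simp
    rw [h2]
    have := h1
    push_cast
    linarith [h1]
  · set s : ℝ := u ⬝ᵥ v with hs
    have hcs : s ^ 2 ≤ 1 := by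
      have h := Finset.sum_mul_sq_le_sq_mul_sq Finset.univ u v
      simpa [hs, dotProduct, hu, hv] using h
    have hs1 : s ≤ 1 := by nlinarith
    have hsum : ∑ i, (u i - v i) ^ 2 = 2 - 2 * s := by
      have he : ∀ i, (u i - v i) ^ 2 = u i ^ 2 + v i ^ 2 - 2 * (u i * v i) :=
        fun i => by ring
      simp only [he, Finset.sum_sub_distrib, Finset.sum_add_distrib,
        ← Finset.mul_sum, hu, hv]
      simp [hs, dotProduct]
      norm_num
    rw [hsum]
    have hk : 0 ≤ lam ^ 2 / (1 - lam) := by positivity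
    have hexp : 2 * lam ^ 2 / (1 - lam) = 2 * (lam ^ 2 / (1 - lam)) := by ring
    rw [hexp]
    nlinarith [sq_nonneg (1 - s), mul_nonneg hk (sq_nonneg (1 - s))]
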